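/- Let A, B be hoops and p : A → B, s : B → A hoop homomorphisms with p ∘ s = id_B and with s a strong section (a → s(b) = s(p(a)) → s(b) for all a ∈ A, b ∈ B), and let X = {a ∈ A | p(a) = 1}. Then for all x, x' ∈ X and b ∈ B: (i) ((x → s(b)) · x') → s(b) = 1; (ii) ((((x → s(b)) · x') → s(b)) → s(b)) → ((x → s(b)) · x') = s(b) → (s(b) · x'). Consequently the maps a ↦ (s(p(a)) → a, p(a)) and (x, b) ↦ s(b) · x are mutually inverse bijections between A and the set Y' = {(x, b) ∈ X × B | s(b) → (s(b) · x) = x}. -/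
import Mathlib


class Hoop (α : Type*) extends CommMonoid α, HImp α where
  himp_self : ∀ x : α, x ⇨ x = 1
  mul_himp_comm : ∀ x y : α, x * (x ⇨ y) = y * (y ⇨ x)
  mul_himp_assoc : ∀ x y z : α, (x * y) ⇨ z = x ⇨ (y ⇨ z)

/-- For a split epimorphism of hoops `p : A → B` with strong section `s`
(`a → s b = s(p a) → s b`) and kernel `X = {a | p a = 1}`:
(i) `((x → s b) · x') → s b = 1` for `x, x' ∈ X`;
(ii) `((((x → s b) · x') → s b) → s b) → ((x → s b) · x') = s b → (s b · x')`;
and the maps `a ↦ (s(p a) → a, p a)` and `(x,b) ↦ s b · x` are mutually inverse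
bijections between `A` and `Y' = {(x,b) ∈ X × B | s b → (s b · x) = x}`. -/

private lemma Hoop.one_himp {α : Type*} [Hoop α] (x : α) : (1 : α) ⇨ x = x := by
  have h1 := Hoop.himp_self (α := α)
  have h2 := Hoop.mul_himp_comm (α := α)
  have h3 := Hoop.mul_himp_assoc (α := α)
  have hd1 : (1 : α) ⇨ (x ⇨ 1) = x ⇨ 1 := by rw [← h3, one_mul]
  have hA : (x ⇨ 1) * ((x ⇨ 1) ⇨ 1) = x ⇨ 1 := by
    rw [h2 (x ⇨ 1) 1, one_mul, hd1]
  have hu : x * (x ⇨ 1) = (1 : α) ⇨ x := by rw [h2 x 1, one_mul]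
  have hxu : x ⇨ ((1 : α) ⇨ x) = 1 := by rw [← h3, mul_one, h1]
  have hux : ((1 : α) ⇨ x) * (((1 : α) ⇨ x) ⇨ x) = x := by
    rw [h2 ((1 : α) ⇨ x) x, hxu, mul_one]
  have hux2 : ((1 : α) ⇨ x) ⇨ x = (x ⇨ 1) ⇨ 1 := by
    rw [← hu, mul_comm, h3, h1]
  conv_rhs => rw [← hux]
  rw [hux2, ← hu, mul_assoc, hA]

theorem stmt2 {A B : Type*} [Hoop A] [Hoop B] (p : A → B) (s : B → A)
    (hp1 : p 1 = 1) (hpm : ∀ a a' : A, p (a * a') = p a * p a')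
    (hpi : ∀ a a' : A, p (a ⇨ a') = p a ⇨ p a')
    (hs1 : s 1 = 1) (hsm : ∀ b b' : B, s (b * b') = s b * s b')
    (hsi : ∀ b b' : B, s (b ⇨ b') = s b ⇨ s b')
    (hps : ∀ b : B, p (s b) = b)
    (hss : ∀ (a : A) (b : B), a ⇨ s b = s (p a) ⇨ s b) :
    -- (i) and (ii)
    (∀ (x x' : A) (b : B), p x = 1 → p x' = 1 →
      (((x ⇨ s b) * x') ⇨ s b = 1) ∧
      ((((x ⇨ s b) * x') ⇨ s b) ⇨ s b) ⇨ ((x ⇨ s b) * x') = s b ⇨ (s b * x')) ∧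
    -- a ↦ (s(p a) → a, p a) lands in Y' and (x,b) ↦ s b · x is a left inverse
    (∀ a : A,
      p (s (p a) ⇨ a) = 1 ∧
      s (p a) ⇨ (s (p a) * (s (p a) ⇨ a)) = s (p a) ⇨ a ∧
      s (p a) * (s (p a) ⇨ a) = a) ∧
    -- (x,b) ↦ s b · x followed by a ↦ (s(p a) → a, p a) is the identity on Y'
    (∀ (x : A) (b : B), p x = 1 → s b ⇨ (s b * x) = x →
      s (p (s b * x)) ⇨ (s b * x) = x ∧ p (s b * x) = b) := by
  refine ⟨?_, ?_, ?_⟩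
  · intro x x' b hx hx'
    have hxb : x ⇨ s b = s b := by rw [hss, hx, hs1, Hoop.one_himp]
    have hx'b : x' ⇨ s b = s b := by rw [hss, hx', hs1, Hoop.one_himp]
    constructor
    · rw [Hoop.mul_himp_assoc, hxb, hx'b, Hoop.himp_self]
    · rw [hxb, Hoop.mul_himp_assoc, hx'b, Hoop.himp_self, Hoop.one_himp]
  · intro a
    have ha : a ⇨ s (p a) = 1 := by rw [hss, Hoop.himp_self]
    have key : s (p a) * (s (p a) ⇨ a) = a := by
      rw [Hoop.mul_himp_comm, ha, mul_one]
    exact ⟨by rw [hpi, hps, Hoop.himp_self], by rw [key], key⟩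
  · intro x b hx hxb
    have hpb : p (s b * x) = b := by rw [hpm, hps, hx, mul_one]
    exact ⟨by rw [hpb]; exact hxb, hpb⟩
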